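/- Let n = ℓ + (n−ℓ), K = [[K₁₁,K₁₂],[K₂₁,K₂₂]] ∈ ℝ^{n×n} with Id_n − K invertible, B = [B₁; B₂] ∈ ℝ^{n×m}, L₁, L₂ ∈ ℝ^{m×n}. Define K₊ = [[Id_ℓ, 0],[K₂₁, K₂₂]], K₋ = [[K₁₁, K₁₂],[0, Id_{n−ℓ}]], and assume K₋ − K₊ is invertible. Then −L₁B + (L₁K + L₂)(K₋ − K₊)⁻¹ [B₁; −B₂] = −(L₁ + L₂)(Id_n − K)⁻¹ B. In particular T₂ = −T₁ where T₁ = (L₁+L₂)(Id_n−K)⁻¹B. -/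
import Mathlib


/-- In the constant-coefficient case the two rank conditions coincide:
`−L₁B + (L₁K + L₂)(K₋ − K₊)⁻¹ [B₁; −B₂] = −(L₁ + L₂)(Id − K)⁻¹ B`, i.e. `T₂ = −T₁`. -/
theorem stmt8 (ℓ k m : ℕ)
    (K11 : Matrix (Fin ℓ) (Fin ℓ) ℝ) (K12 : Matrix (Fin ℓ) (Fin k) ℝ)
    (K21 : Matrix (Fin k) (Fin ℓ) ℝ) (K22 : Matrix (Fin k) (Fin k) ℝ)
    (B1 : Matrix (Fin ℓ) (Fin m) ℝ) (B2 : Matrix (Fin k) (Fin m) ℝ)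
    (L1 L2 : Matrix (Fin m) (Fin ℓ ⊕ Fin k) ℝ)
    (hK : IsUnit (1 - Matrix.fromBlocks K11 K12 K21 K22).det)
    (hKpm : IsUnit (Matrix.fromBlocks K11 K12 0 1 - Matrix.fromBlocks 1 0 K21 K22).det) :
    -L1 * Matrix.fromRows B1 B2
      + (L1 * Matrix.fromBlocks K11 K12 K21 K22 + L2)
        * (Matrix.fromBlocks K11 K12 0 1 - Matrix.fromBlocks 1 0 K21 K22)⁻¹
        * Matrix.fromRows B1 (-B2)
    = -(L1 + L2) * (1 - Matrix.fromBlocks K11 K12 K21 K22)⁻¹ * Matrix.fromRows B1 B2 := by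
  set K : Matrix (Fin ℓ ⊕ Fin k) (Fin ℓ ⊕ Fin k) ℝ := Matrix.fromBlocks K11 K12 K21 K22 with hKdef
  set D : Matrix (Fin ℓ ⊕ Fin k) (Fin ℓ ⊕ Fin k) ℝ := Matrix.fromBlocks 1 0 0 (-1) with hDdef
  have hD : D * D = 1 := by
    simp [hDdef, Matrix.fromBlocks_multiply, ← Matrix.fromBlocks_one]
  have hDinv : D⁻¹ = D := Matrix.inv_eq_right_inv hD
  have h1 : Matrix.fromBlocks K11 K12 0 1 - Matrix.fromBlocks 1 0 K21 K22 = D * (K - 1) := by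
    rw [hDdef, hKdef, ← Matrix.fromBlocks_one, mul_sub,
      Matrix.fromBlocks_multiply, Matrix.fromBlocks_multiply]
    ext (i|i) (j|j) <;> simp [Matrix.fromBlocks] <;> ring
  have hM : (1 - K) * (1 - K)⁻¹ = 1 := Matrix.mul_nonsing_inv _ hK
  have hneg : (K - 1)⁻¹ = -(1 - K)⁻¹ := by
    apply Matrix.inv_eq_right_inv
    rw [mul_neg, sub_mul, one_mul]
    calc -(K * (1 - K)⁻¹ - (1 - K)⁻¹) = (1 - K) * (1 - K)⁻¹ := by noncomm_ring
      _ = 1 := hM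
  have hB : D * Matrix.fromRows B1 (-B2) = Matrix.fromRows B1 B2 := by
    rw [hDdef, Matrix.fromBlocks_mul_fromRows]
    simp
  rw [h1, Matrix.mul_inv_rev, hDinv, hneg, Matrix.mul_assoc _ _ (Matrix.fromRows B1 (-B2)), Matrix.mul_assoc (-(1 - K)⁻¹) D, hB]
  have hL1 : -L1 * Matrix.fromRows B1 B2 = -L1 * ((1 - K) * (1 - K)⁻¹) * Matrix.fromRows B1 B2 := by
    rw [hM, Matrix.mul_one]
  rw [hL1]
  simp only [Matrix.mul_sub, Matrix.sub_mul, Matrix.add_mul, Matrix.neg_mul, Matrix.mul_neg,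
    Matrix.mul_assoc, Matrix.mul_one, Matrix.one_mul]
  abel
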